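/- For every real q with 0 < q < 1, every integer k ≥ 0, and every nonzero complex number z, one has q^{k(k−1)} |z|^k ≤ (|z|/√q)^{1/2} · exp(−(log|z|)²/(4 log q)). -/

import Mathlib

/-- For `0 < q < 1`, `k ∈ ℕ` and nonzero complex `z`,
`q^{k(k−1)} |z|^k ≤ (|z|/√q)^{1/2} · exp(−(log|z|)²/(4 log q))`. -/
theorem pow_mul_abs_pow_le (q : ℝ) (hq0 : 0 < q) (hq1 : q < 1) (k : ℕ) (z : ℂ) (hz : z ≠ 0) :
    q ^ (k * (k - 1)) * ‖z‖ ^ k ≤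
      (‖z‖ / Real.sqrt q) ^ ((1 : ℝ) / 2) *
        Real.exp (-(Real.log (‖z‖)) ^ 2 / (4 * Real.log q)) := by
  have hA : (0:ℝ) < ‖z‖ := norm_pos_iff.mpr hz
  have hL : Real.log q < 0 := Real.log_neg hq0 hq1
  set x := Real.log (‖z‖) with hxdef
  set L := Real.log q with hLdef
  have hsqrt : (0:ℝ) < Real.sqrt q := Real.sqrt_pos.mpr hq0
  have hbase : (0:ℝ) < ‖z‖ / Real.sqrt q := div_pos hA hsqrt
  have h1 : q ^ (k * (k - 1)) * ‖z‖ ^ k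
      = Real.exp (((k * (k - 1) : ℕ) : ℝ) * L + (k : ℝ) * x) := by
    rw [Real.exp_add]
    congr 1
    · rw [hLdef, ← Real.log_pow, Real.exp_log (by positivity)]
    · rw [hxdef, ← Real.log_pow, Real.exp_log (by positivity)]
  have h2 : (‖z‖ / Real.sqrt q) ^ ((1 : ℝ) / 2) *
        Real.exp (-x ^ 2 / (4 * L))
      = Real.exp ((x - L / 2) * (1 / 2) + -x ^ 2 / (4 * L)) := by
    rw [Real.exp_add]
    congr 1
    rw [Real.rpow_def_of_pos hbase, Real.log_div (ne_of_gt hA) (ne_of_gt hsqrt),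
      Real.log_sqrt hq0.le, hxdef, hLdef]
  rw [h1, h2, Real.exp_le_exp]
  have hN : ((k * (k - 1) : ℕ) : ℝ) = (k : ℝ) ^ 2 - (k : ℝ) := by
    rcases k with _ | m
    · simp
    · push_cast [Nat.succ_sub_one]
      ring
  rw [hN]
  have h4L : 4 * L < 0 := by linarith
  have key : ((k : ℝ) ^ 2 - (k : ℝ)) * L + (k : ℝ) * x - (x - L / 2) * (1 / 2)
      ≤ -x ^ 2 / (4 * L) := by
    rw [le_div_iff_of_neg h4L]
    nlinarith [sq_nonneg (x + (2 * (k : ℝ) - 1) * L)]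
  linarith
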